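/- arXiv:1202.5619 — 4 statements merged into one kernel-verified Lean document; each statement's English description precedes it below -/
import Mathlib

section
/- Let G be a graph where all vertices have weight 1. Then the minimum cost OPT_G over infinite walks equals the length of a shortest closed tour of G visiting every vertex exactly once (a TSP tour), provided G is metric. -/
open scoped ENNReal BigOperators

/-- Total edge length of the segment of the infinite walk `W` from index `a` to `b`. -/
noncomputable def walkLen {V : Type*} (l : V → V → ℝ≥0∞) (W : ℕ → V) (a b : ℕ) : ℝ≥0∞ :=
  ∑ i ∈ Finset.Ico a b, l (W i) (W (i + 1))

/-- The walk visits every vertex infinitely often. -/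
def VisitsInfOften {V : Type*} (W : ℕ → V) : Prop :=
  ∀ v : V, ∀ N : ℕ, ∃ a : ℕ, N ≤ a ∧ W a = v

/-- Latency of vertex `v` on infinite walk `W`: the supremum, over visits to `v`,
of the length of the sub-walk until the next visit to `v`. -/
noncomputable def latency {V : Type*} (l : V → V → ℝ≥0∞) (W : ℕ → V) (v : V) : ℝ≥0∞ :=
  ⨆ (a : ℕ) (_ : W a = v), ⨅ (b : ℕ) (_ : a < b ∧ W b = v), walkLen l W a b

/-- Cost of an infinite walk: the maximum weighted latency over all vertices. -/
noncomputable def walkCost {V : Type*} (l : V → V → ℝ≥0∞) (φ : V → ℝ≥0∞) (W : ℕ → V) : ℝ≥0∞ :=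
  ⨆ v : V, φ v * latency l W v

/-- Optimal cost over all infinite walks (complete graph) visiting all vertices
infinitely often. -/
noncomputable def OPT {V : Type*} (l : V → V → ℝ≥0∞) (φ : V → ℝ≥0∞) : ℝ≥0∞ :=
  ⨅ (W : ℕ → V) (_ : VisitsInfOften W), walkCost l φ W

lemma walkLen_add {V : Type*} (l : V → V → ℝ≥0∞) (W : ℕ → V) {a b c : ℕ}
    (h1 : a ≤ b) (h2 : b ≤ c) : walkLen l W a b + walkLen l W b c = walkLen l W a c :=
  Finset.sum_Ico_consecutive _ h1 h2

lemma walkLen_mono {V : Type*} (l : V → V → ℝ≥0∞) (W : ℕ → V) {a b c : ℕ}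
    (h : b ≤ c) : walkLen l W a b ≤ walkLen l W a c :=
  Finset.sum_le_sum_of_subset (Finset.Ico_subset_Ico le_rfl h)

lemma edist_le_walkLen {V : Type*} [MetricSpace V] (W : ℕ → V) {s t : ℕ} (h : s ≤ t) :
    edist (W s) (W t) ≤ walkLen (fun x y => edist x y) W s t := by
  induction t, h using Nat.le_induction with
  | base => simp [walkLen]
  | succ t ht ih =>
    have : walkLen (fun x y => edist x y) W s (t + 1)
        = walkLen (fun x y => edist x y) W s t + edist (W t) (W (t + 1)) := by
      rw [walkLen, Finset.sum_Ico_succ_top ht]; rfl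
    rw [this]
    exact le_trans (edist_triangle _ (W t) _) (add_le_add_left ih _)

lemma chain_mono (T : ℕ → ℕ) : ∀ n, (∀ i < n, T i ≤ T (i + 1)) → T 0 ≤ T n := by
  intro n
  induction n with
  | zero => intro _; exact le_rfl
  | succ n ih =>
    intro h
    exact le_trans (ih fun i hi => h i (by omega)) (h n (by omega))

lemma walkLen_chain {V : Type*} (l : V → V → ℝ≥0∞) (W : ℕ → V) (T : ℕ → ℕ) :
    ∀ n, (∀ i < n, T i ≤ T (i + 1)) →
      ∑ k ∈ Finset.range n, walkLen l W (T k) (T (k + 1)) = walkLen l W (T 0) (T n) := by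
  intro n
  induction n with
  | zero => intro _; simp [walkLen]
  | succ n ih =>
    intro h
    rw [Finset.sum_range_succ, ih fun i hi => h i (by omega)]
    exact walkLen_add l W (chain_mono T n fun i hi => h i (by omega)) (h n (by omega))

lemma finRotate_val {n : ℕ} (hn : 0 < n) (i : Fin n) :
    (finRotate n i).val = (i.val + 1) % n := by
  obtain ⟨m, rfl⟩ := Nat.exists_eq_succ_of_ne_zero hn.ne'
  rw [finRotate_succ_apply]
  rcases eq_or_ne i (Fin.last m) with h | h
  · subst h; simp [Fin.last_add_one]
  · have hi : i.val < m := Fin.val_lt_last h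
    rw [Fin.val_add_one_of_lt (Fin.lt_last_iff_ne_last.mpr h), Nat.mod_eq_of_lt (by omega)]

set_option maxHeartbeats 1000000 in
lemma shortcut {V : Type*} [MetricSpace V] [Fintype V] [Nonempty V] (W : ℕ → V) (a b : ℕ)
    (hWab : W a = W b)
    (hall : ∀ v : V, ∃ i, a ≤ i ∧ i ≤ b ∧ W i = v) :
    ∃ e : Fin (Fintype.card V) ≃ V,
      ∑ i : Fin (Fintype.card V), edist (e i) (e (finRotate _ i)) ≤
        walkLen (fun x y => edist x y) W a b := by
  classical
  set n := Fintype.card V with hn_def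
  have hn : 0 < n := Fintype.card_pos
  let g : V → ℕ := fun v => Nat.find (hall v)
  have hg1 : ∀ v, a ≤ g v ∧ g v ≤ b ∧ W (g v) = v := fun v => Nat.find_spec (hall v)
  have hgmin : ∀ v i, a ≤ i → i ≤ b → W i = v → g v ≤ i :=
    fun v i h1 h2 h3 => Nat.find_min' (hall v) ⟨h1, h2, h3⟩
  have hginj : Function.Injective g := fun u v huv => by
    rw [← (hg1 u).2.2, ← (hg1 v).2.2, huv]
  have hab : a ≤ b := by
    obtain ⟨v⟩ := (inferInstance : Nonempty V)
    exact le_trans (hg1 v).1 (hg1 v).2.1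
  have hga : g (W a) = a := le_antisymm (hgmin _ _ le_rfl hab rfl) (hg1 _).1
  set S : Finset ℕ := Finset.univ.image g with hS_def
  have hScard : S.card = n := by
    rw [hS_def, Finset.card_image_of_injective _ hginj, Finset.card_univ]
  let o := S.orderIsoOfFin hScard
  have hoS : ∀ i : Fin n, (o i : ℕ) ∈ S := fun i => (o i).2
  have hWg : ∀ s ∈ S, g (W s) = s := by
    intro s hs
    obtain ⟨v, -, rfl⟩ := Finset.mem_image.mp hs
    rw [(hg1 v).2.2]
  have hSab : ∀ s ∈ S, a ≤ s ∧ s ≤ b := by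
    intro s hs
    obtain ⟨v, -, rfl⟩ := Finset.mem_image.mp hs
    exact ⟨(hg1 v).1, (hg1 v).2.1⟩
  have haS : a ∈ S := Finset.mem_image.mpr ⟨W a, Finset.mem_univ _, hga⟩
  let f : Fin n → V := fun i => W (o i)
  have hfinj : Function.Injective f := by
    intro i j h
    have h2 := congrArg g h
    rw [show g (f i) = g (W (o i)) from rfl, show g (f j) = g (W (o j)) from rfl,
      hWg _ (hoS i), hWg _ (hoS j)] at h2
    exact o.injective (Subtype.ext h2)
  have hbij : Function.Bijective f :=
    (Fintype.bijective_iff_injective_and_card f).mpr ⟨hfinj, by simp [hn_def]⟩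
  let e := Equiv.ofBijective f hbij
  refine ⟨e, ?_⟩
  have ho0 : (o ⟨0, hn⟩ : ℕ) = a := by
    refine le_antisymm ?_ (hSab _ (hoS _)).1
    have h1 : o ⟨0, hn⟩ ≤ o (o.symm ⟨a, haS⟩) :=
      o.monotone (Fin.le_def.mpr (Nat.zero_le _))
    simpa using Subtype.coe_le_coe.mpr h1
  set T : ℕ → ℕ := fun k => if h : k < n then (o ⟨k, h⟩ : ℕ) else b with hT_def
  have hT0 : T 0 = a := by simp only [hT_def, dif_pos hn]; exact ho0
  have hTn : T n = b := by simp [hT_def]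
  have hTmono : ∀ k < n, T k ≤ T (k + 1) := by
    intro k hk
    by_cases h' : k + 1 < n
    · simp only [hT_def, dif_pos hk, dif_pos h']
      exact le_of_lt (o.strictMono (Fin.mk_lt_mk.mpr (Nat.lt_succ_self k)))
    · simp only [hT_def, dif_pos hk, dif_neg h']
      exact (hSab _ (hoS _)).2
  have hei : ∀ i : Fin n, e i = W (T i.val) := by
    intro i
    show W (o i) = W (T i.val)
    simp only [hT_def, dif_pos i.isLt, Fin.eta]
  have hterm : ∀ i : Fin n,
      edist (e i) (e (finRotate n i)) ≤ walkLen (fun x y => edist x y) W (T i.val) (T (i.val + 1)) := by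
    intro i
    by_cases h' : i.val + 1 < n
    · have hfr : finRotate n i = ⟨i.val + 1, h'⟩ := by
        apply Fin.ext
        rw [finRotate_val hn i, Nat.mod_eq_of_lt h']
      rw [hei i, hfr, hei ⟨i.val + 1, h'⟩]
      exact edist_le_walkLen W (hTmono i.val i.isLt)
    · have hlast : i.val + 1 = n := by have := i.isLt; omega
      have hfr : finRotate n i = ⟨0, hn⟩ := by
        apply Fin.ext
        rw [finRotate_val hn i, hlast, Nat.mod_self]
      have he0 : e (⟨0, hn⟩ : Fin n) = W (T (i.val + 1)) := by
        rw [hei ⟨0, hn⟩]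
        show W (T 0) = W (T (i.val + 1))
        rw [hT0, hlast, hTn, hWab]
      rw [hei i, hfr, he0]
      refine edist_le_walkLen W ?_
      rw [hlast, hTn]
      simp only [hT_def, dif_pos i.isLt]
      exact (hSab _ (hoS _)).2
  calc ∑ i : Fin n, edist (e i) (e (finRotate n i))
      ≤ ∑ i : Fin n, walkLen (fun x y => edist x y) W (T i.val) (T (i.val + 1)) :=
        Finset.sum_le_sum fun i _ => hterm i
    _ = ∑ k ∈ Finset.range n, walkLen (fun x y => edist x y) W (T k) (T (k + 1)) :=
        Fin.sum_univ_eq_sum_range (fun k => walkLen (fun x y => edist x y) W (T k) (T (k + 1))) n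
    _ = walkLen (fun x y => edist x y) W (T 0) (T n) :=
        walkLen_chain _ W T n hTmono
    _ = walkLen (fun x y => edist x y) W a b := by rw [hT0, hTn]

set_option maxHeartbeats 1000000 in
/-- In a metric graph in which all vertex weights equal 1, the optimal min-max latency
cost equals the length of a shortest TSP tour. -/
theorem OPT_eq_TSP_of_unit_weights {V : Type*} [MetricSpace V] [Fintype V] [Nonempty V] :
    OPT (fun a b => edist a b) (fun _ : V => (1 : ℝ≥0∞)) =
      ⨅ e : Fin (Fintype.card V) ≃ V,
        ∑ i : Fin (Fintype.card V), edist (e i) (e (finRotate _ i)) := by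
  classical
  set n := Fintype.card V with hn_def
  have hn : 0 < n := Fintype.card_pos
  set l : V → V → ℝ≥0∞ := fun a b => edist a b with hl_def
  apply le_antisymm
  · -- OPT ≤ TSP
    refine le_iInf fun e => ?_
    set Wp : ℕ → V := fun k => e ⟨k % n, Nat.mod_lt _ hn⟩ with hWp_def
    have hper : ∀ k, Wp (k + n) = Wp k := by
      intro k; simp only [hWp_def, Nat.add_mod_right]
    have hVIO : VisitsInfOften Wp := by
      intro v N
      refine ⟨(e.symm v).val + n * (N + 1), ?_, ?_⟩
      · have : N + 1 ≤ n * (N + 1) := Nat.le_mul_of_pos_left _ hn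
        omega
      · simp only [hWp_def, Nat.add_mul_mod_self_left,
          Nat.mod_eq_of_lt (e.symm v).isLt, Fin.eta, Equiv.apply_symm_apply]
    set L : ℝ≥0∞ := ∑ i : Fin n, edist (e i) (e (finRotate n i)) with hL_def
    have hshift : ∀ a, walkLen l Wp a (a + n) = walkLen l Wp 0 n := by
      intro a
      induction a with
      | zero => rw [Nat.zero_add]
      | succ a ih =>
        have h1 : walkLen l Wp a (a + n) = walkLen l Wp a (a + 1) + walkLen l Wp (a + 1) (a + n) :=
          (walkLen_add l Wp (by omega) (by omega)).symm
        have h2 : walkLen l Wp (a + 1) (a + 1 + n) =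
            walkLen l Wp (a + 1) (a + n) + l (Wp (a + n)) (Wp (a + n + 1)) := by
          rw [walkLen, show a + 1 + n = (a + n) + 1 by omega,
            Finset.sum_Ico_succ_top (show a + 1 ≤ a + n by omega)]; rfl
        have h3 : walkLen l Wp a (a + 1) = l (Wp a) (Wp (a + 1)) := by
          rw [walkLen, Finset.sum_Ico_succ_top le_rfl]
          simp
        have h4 : l (Wp (a + n)) (Wp (a + n + 1)) = l (Wp a) (Wp (a + 1)) := by
          rw [hper a, show a + n + 1 = (a + 1) + n by omega, hper (a + 1)]
        rw [h2, h4, ← ih, h1, h3, add_comm]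
    have hL : walkLen l Wp 0 n = L := by
      have hpt : ∀ i : Fin n, edist (e i) (e (finRotate n i)) = l (Wp i.val) (Wp (i.val + 1)) := by
        intro i
        have h1 : Wp i.val = e i := by
          simp only [hWp_def, Nat.mod_eq_of_lt i.isLt, Fin.eta]
        have h2 : Wp (i.val + 1) = e (finRotate n i) := by
          simp only [hWp_def]
          congr 1
          exact (Fin.ext (finRotate_val hn i)).symm
        rw [h1, h2]
      rw [hL_def]
      rw [walkLen, ← Finset.range_eq_Ico]
      rw [show (∑ i : Fin n, edist (e i) (e (finRotate n i)))
          = ∑ i : Fin n, l (Wp i.val) (Wp (i.val + 1)) from Finset.sum_congr rfl fun i _ => hpt i]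
      exact (Fin.sum_univ_eq_sum_range (fun k => l (Wp k) (Wp (k + 1))) n).symm
    have hlat : ∀ v, latency l Wp v ≤ L := by
      intro v
      refine iSup₂_le fun a ha => ?_
      refine le_trans (iInf₂_le (a + n) ⟨by omega, by rw [hper, ha]⟩) ?_
      rw [hshift a, hL]
    have hcost : walkCost l (fun _ : V => (1 : ℝ≥0∞)) Wp ≤ L := by
      refine iSup_le fun v => ?_
      rw [one_mul]; exact hlat v
    calc OPT l (fun _ : V => (1 : ℝ≥0∞)) ≤ walkCost l (fun _ : V => (1 : ℝ≥0∞)) Wp :=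
          iInf₂_le Wp hVIO
      _ ≤ L := hcost
  · -- TSP ≤ OPT
    refine le_iInf fun Wk => le_iInf fun hVk => ?_
    have hc : ∀ v : V, ∃ i, Wk i = v := fun v => (hVk v 0).imp fun a h => h.2
    choose c hc using hc
    set t₀ : ℕ := Finset.univ.sup c + 1 with ht₀_def
    have hct : ∀ v, c v < t₀ := fun v =>
      Nat.lt_succ_of_le (Finset.le_sup (Finset.mem_univ v))
    set f : V → ℕ := fun v => Nat.find (hVk v t₀) with hf_def
    have hfspec : ∀ v, t₀ ≤ f v ∧ Wk (f v) = v := fun v => Nat.find_spec (hVk v t₀)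
    have hfmin : ∀ v k, k < f v → ¬(t₀ ≤ k ∧ Wk k = v) := fun v k hk => Nat.find_min (hVk v t₀) hk
    obtain ⟨vs, -, ht₁⟩ := Finset.exists_mem_eq_sup Finset.univ Finset.univ_nonempty f
    set t₁ : ℕ := f vs with ht₁_def
    have hfle : ∀ v, f v ≤ t₁ := fun v =>
      le_trans (Finset.le_sup (Finset.mem_univ v)) (le_of_eq ht₁)
    set a : ℕ := Nat.findGreatest (fun i => Wk i = vs) (t₀ - 1) with ha_def
    have ht₀pos : 1 ≤ t₀ := by omega
    have hcvs : c vs ≤ t₀ - 1 := by have := hct vs; omega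
    have hWa : Wk a = vs := Nat.findGreatest_spec (P := fun i => Wk i = vs) hcvs (hc vs)
    have ha_le : a ≤ t₀ - 1 := Nat.findGreatest_le _
    have hgreatest : ∀ k, a < k → k ≤ t₀ - 1 → Wk k ≠ vs := fun k h1 h2 =>
      Nat.findGreatest_is_greatest (P := fun i => Wk i = vs) h1 h2
    have hat1 : a < t₁ := by
      have := (hfspec vs).1
      rw [← ht₁_def] at this
      omega
    have hWt₁ : Wk t₁ = vs := (hfspec vs).2
    have hnib : ∀ b', a < b' → Wk b' = vs → t₁ ≤ b' := by
      intro b' h1 h2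
      by_contra h
      push_neg at h
      rcases lt_or_ge b' t₀ with h3 | h3
      · exact hgreatest b' h1 (by omega) h2
      · exact hfmin vs b' h ⟨h3, h2⟩
    have hall : ∀ v, ∃ i, a ≤ i ∧ i ≤ t₁ ∧ Wk i = v := by
      intro v
      refine ⟨f v, ?_, hfle v, (hfspec v).2⟩
      have := (hfspec v).1
      omega
    obtain ⟨e, he⟩ := shortcut Wk a t₁ (hWa.trans hWt₁.symm) hall
    have hinf : walkLen l Wk a t₁ ≤ ⨅ (b : ℕ) (_ : a < b ∧ Wk b = vs), walkLen l Wk a b := by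
      refine le_iInf₂ fun b hb => ?_
      exact walkLen_mono l Wk (hnib b hb.1 hb.2)
    calc (⨅ e : Fin n ≃ V, ∑ i : Fin n, edist (e i) (e (finRotate n i)))
        ≤ ∑ i : Fin n, edist (e i) (e (finRotate n i)) := iInf_le _ e
      _ ≤ walkLen l Wk a t₁ := he
      _ ≤ ⨅ (b : ℕ) (_ : a < b ∧ Wk b = vs), walkLen l Wk a b := hinf
      _ ≤ latency l Wk vs := le_iSup₂ (f := fun (a : ℕ) (_ : Wk a = vs) =>
          ⨅ (b : ℕ) (_ : a < b ∧ Wk b = vs), walkLen l Wk a b) a hWa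
      _ = (fun _ : V => (1 : ℝ≥0∞)) vs * latency l Wk vs := (one_mul _).symm
      _ ≤ walkCost l (fun _ : V => (1 : ℝ≥0∞)) Wk := by
          rw [walkCost]
          exact le_iSup (fun v : V => (fun _ : V => (1 : ℝ≥0∞)) v * latency l Wk v) vs
end

section
/- For every n ≥ 2, there exists a metric graph G on n vertices with weights in (0,1] such that the cost of the infinite walk obtained by repeating a TSP tour of G is at least (n−1)·OPT_G. -/
open scoped ENNReal BigOperators

open Fin.NatCast

/-- auxiliary: vertex "radius": 0 for the center, 1 for leaves -/
noncomputable def ccST (m : ℕ) : Fin (m + 2) → ℝ≥0∞ := fun v => if v = 0 then 0 else 1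

/-- auxiliary: star metric -/
noncomputable def llST (m : ℕ) : Fin (m + 2) → Fin (m + 2) → ℝ≥0∞ :=
  fun u v => if u = v then 0 else ccST m u + ccST m v

/-- auxiliary: the good walk 0,1,0,2,0,3,... -/
def WgoodST (m : ℕ) : ℕ → Fin (m + 2) :=
  fun j => if j % 2 = 0 then 0 else ((j / 2) % (m + 1) + 1 : ℕ)

lemma ccST_le_one (m : ℕ) (v : Fin (m + 2)) : ccST m v ≤ 1 := by
  unfold ccST; split <;> simp

lemma llST_le (m : ℕ) (u v : Fin (m + 2)) : llST m u v ≤ ccST m u + ccST m v := by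
  unfold llST; split <;> simp

lemma llST_ne (m : ℕ) {u v : Fin (m + 2)} (h : u ≠ v) :
    llST m u v = ccST m u + ccST m v := by
  unfold llST; rw [if_neg h]

lemma fin_add_one_ne (m : ℕ) (i : Fin (m + 2)) : i + 1 ≠ i := by
  intro h
  have h1 : (1 : Fin (m + 2)) = 0 := by
    have := congrArg (· - i) h
    simpa [add_comm, add_sub_cancel_right] using this
  have := congrArg Fin.val h1
  simp [Fin.val_one] at this

/-- total length of any tour is the same -/
lemma tour_sum (m : ℕ) (f : Fin (m + 2) ≃ Fin (m + 2)) :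
    ∑ i : Fin (m + 2), llST m (f i) (f (i + 1)) =
      (∑ v : Fin (m + 2), ccST m v) + ∑ v : Fin (m + 2), ccST m v := by
  have h1 : ∀ i : Fin (m + 2), llST m (f i) (f (i + 1)) =
      ccST m (f i) + ccST m (f (i + 1)) := by
    intro i
    exact llST_ne m (fun h => fin_add_one_ne m i (f.injective h).symm)
  calc ∑ i : Fin (m + 2), llST m (f i) (f (i + 1))
      = ∑ i : Fin (m + 2), (ccST m (f i) + ccST m (f (i + 1))) := by
        exact Finset.sum_congr rfl (fun i _ => h1 i)
    _ = (∑ i : Fin (m + 2), ccST m (f i)) + ∑ i : Fin (m + 2), ccST m (f (i + 1)) :=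
        Finset.sum_add_distrib
    _ = (∑ v : Fin (m + 2), ccST m v) + ∑ v : Fin (m + 2), ccST m v := by
        rw [Equiv.sum_comp f (ccST m)]
        congr 1
        calc ∑ i : Fin (m + 2), ccST m (f (i + 1))
            = ∑ i : Fin (m + 2), ccST m (f i) := Equiv.sum_comp (Equiv.addRight 1) (fun j => ccST m (f j))
          _ = ∑ v : Fin (m + 2), ccST m v := Equiv.sum_comp f (ccST m)

lemma WgoodST_even (m : ℕ) {j : ℕ} (h : j % 2 = 0) : WgoodST m j = 0 := by
  simp [WgoodST, h]

lemma WgoodST_odd (m : ℕ) {j : ℕ} (h : j % 2 ≠ 0) :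
    WgoodST m j = ((j / 2) % (m + 1) + 1 : ℕ) := by
  simp [WgoodST, h]

lemma WgoodST_eq_zero_iff (m : ℕ) (j : ℕ) : WgoodST m j = 0 ↔ j % 2 = 0 := by
  constructor
  · intro h
    by_contra hodd
    rw [WgoodST_odd m hodd] at h
    have hlt : (j / 2) % (m + 1) + 1 < m + 2 := by
      have := Nat.mod_lt (j / 2) (show 0 < m + 1 by omega); omega
    have := congrArg Fin.val h
    rw [Fin.val_natCast, Nat.mod_eq_of_lt hlt] at this
    simp at this
  · exact WgoodST_even m

lemma Wgood_edge_le (m : ℕ) (i : ℕ) :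
    llST m (WgoodST m i) (WgoodST m (i + 1)) ≤ 1 := by
  refine le_trans (llST_le m _ _) ?_
  rcases Nat.even_or_odd i with h | h
  · have h0 : i % 2 = 0 := Nat.even_iff.mp h
    rw [WgoodST_even m h0]
    have : ccST m (0 : Fin (m + 2)) = 0 := by simp [ccST]
    rw [this, zero_add]
    exact ccST_le_one m _
  · have h0 : (i + 1) % 2 = 0 := by
      have := Nat.odd_iff.mp h; omega
    rw [WgoodST_even m h0]
    have : ccST m (0 : Fin (m + 2)) = 0 := by simp [ccST]
    rw [this, add_zero]
    exact ccST_le_one m _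

lemma walkLen_good_le (m : ℕ) (a b : ℕ) :
    walkLen (llST m) (WgoodST m) a b ≤ (b - a : ℕ) := by
  unfold walkLen
  calc ∑ i ∈ Finset.Ico a b, llST m (WgoodST m i) (WgoodST m (i + 1))
      ≤ ∑ _i ∈ Finset.Ico a b, (1 : ℝ≥0∞) :=
        Finset.sum_le_sum (fun i _ => Wgood_edge_le m i)
    _ = (b - a : ℕ) := by
        rw [Finset.sum_const, Nat.card_Ico, nsmul_eq_mul, mul_one]

lemma Wgood_visits (m : ℕ) : VisitsInfOften (WgoodST m) := by
  intro v N
  by_cases hv : v = 0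
  · exact ⟨2 * N, by omega, by subst hv; exact WgoodST_even m (by omega)⟩
  · have hval : 1 ≤ (v : ℕ) := by
      rcases Nat.eq_zero_or_pos (v : ℕ) with h | h
      · exact absurd (Fin.ext h) hv
      · exact h
    have hvlt : (v : ℕ) < m + 2 := v.isLt
    set k : ℕ := ((v : ℕ) - 1) + (m + 1) * N with hk
    have hkN : N ≤ (m + 1) * N := Nat.le_mul_of_pos_left N (by omega)
    refine ⟨2 * k + 1, by omega, ?_⟩
    have hodd : (2 * k + 1) % 2 ≠ 0 := by omega
    rw [WgoodST_odd m hodd]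
    have hdiv : (2 * k + 1) / 2 = k := by omega
    have hmod : k % (m + 1) = (v : ℕ) - 1 := by
      rw [hk, Nat.add_mul_mod_self_left, Nat.mod_eq_of_lt (by omega)]
    rw [hdiv, hmod]
    have : (v : ℕ) - 1 + 1 = (v : ℕ) := by omega
    rw [this, Fin.cast_val_eq_self]

lemma latency_good_zero (m : ℕ) :
    latency (llST m) (WgoodST m) 0 ≤ 2 := by
  refine iSup₂_le fun a ha => ?_
  have haev : a % 2 = 0 := (WgoodST_eq_zero_iff m a).mp ha
  refine le_trans (iInf₂_le (a + 2) ⟨by omega, WgoodST_even m (by omega)⟩) ?_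
  refine le_trans (walkLen_good_le m a (a + 2)) ?_
  norm_num

lemma latency_good_leaf (m : ℕ) (v : Fin (m + 2)) (hv : v ≠ 0) :
    latency (llST m) (WgoodST m) v ≤ ((2 * (m + 1) : ℕ) : ℝ≥0∞) := by
  refine iSup₂_le fun a ha => ?_
  have haodd : a % 2 ≠ 0 := by
    intro h
    exact hv (ha.symm.trans (WgoodST_even m h))
  have hb : WgoodST m (a + 2 * (m + 1)) = v := by
    rw [← ha, WgoodST_odd m (by omega), WgoodST_odd m haodd]
    have h1 : (a + 2 * (m + 1)) / 2 = a / 2 + (m + 1) := by omega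
    rw [h1, Nat.add_mod_right]
  refine le_trans (iInf₂_le (a + 2 * (m + 1)) ⟨by omega, hb⟩) ?_
  refine le_trans (walkLen_good_le m a (a + 2 * (m + 1))) ?_
  norm_num

lemma walkCost_good_le (m : ℕ)
    (φ : Fin (m + 2) → ℝ≥0∞)
    (hφ0 : φ 0 = 1)
    (hφ : ∀ v : Fin (m + 2), v ≠ 0 → φ v = ((2 * (m + 1) : ℕ) : ℝ≥0∞)⁻¹) :
    walkCost (llST m) φ (WgoodST m) ≤ 2 := by
  refine iSup_le fun v => ?_
  by_cases hv : v = 0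
  · subst hv
    rw [hφ0, one_mul]
    exact latency_good_zero m
  · rw [hφ v hv]
    calc ((2 * (m + 1) : ℕ) : ℝ≥0∞)⁻¹ * latency (llST m) (WgoodST m) v
        ≤ ((2 * (m + 1) : ℕ) : ℝ≥0∞)⁻¹ * ((2 * (m + 1) : ℕ) : ℝ≥0∞) :=
          mul_le_mul_right (latency_good_leaf m v hv) _
      _ = 1 := ENNReal.inv_mul_cancel (by positivity) (ENNReal.natCast_ne_top _)
      _ ≤ 2 := by norm_num

lemma count_sum (m : ℕ) (j : ℕ) (hj : j < m + 2) :
    ∑ i ∈ Finset.range (m + 2), (if i = j then (0 : ℝ≥0∞) else 1) = ((m + 1 : ℕ) : ℝ≥0∞) := by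
  have hjmem : j ∈ Finset.range (m + 2) := Finset.mem_range.mpr hj
  rw [← Finset.add_sum_erase _ _ hjmem, if_pos rfl, zero_add]
  rw [Finset.sum_congr rfl (fun i hi => if_neg (Finset.ne_of_mem_erase hi))]
  rw [Finset.sum_const, Finset.card_erase_of_mem hjmem, Finset.card_range,
    nsmul_eq_mul, mul_one]
  norm_num

lemma tour_walk_len (m : ℕ) :
    ((m : ℝ≥0∞) + 1) * 2 ≤ walkLen (llST m) (fun i : ℕ => (i : Fin (m + 2))) 0 (m + 2) := by
  unfold walkLen
  show ((m : ℝ≥0∞) + 1) * 2 ≤ ∑ i ∈ Finset.Ico 0 (m + 2),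
    llST m ((i : Fin (m + 2))) (((i + 1 : ℕ) : Fin (m + 2)))
  refine le_of_eq ?_
  have hterm : ∀ i : ℕ, llST m ((i : Fin (m + 2))) (((i + 1 : ℕ) : Fin (m + 2))) =
      ccST m ((i : Fin (m + 2))) + ccST m (((i + 1 : ℕ) : Fin (m + 2))) := by
    intro i
    refine llST_ne m ?_
    have h1 : ((i + 1 : ℕ) : Fin (m + 2)) = (i : Fin (m + 2)) + 1 := by push_cast; ring
    rw [h1]
    exact fun h => fin_add_one_ne m (i : Fin (m + 2)) h.symm
  calc ((m : ℝ≥0∞) + 1) * 2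
      = ((m + 1 : ℕ) : ℝ≥0∞) + ((m + 1 : ℕ) : ℝ≥0∞) := by push_cast; ring
    _ = (∑ i ∈ Finset.range (m + 2), (if i = 0 then (0 : ℝ≥0∞) else 1)) +
          ∑ i ∈ Finset.range (m + 2), (if i = m + 1 then (0 : ℝ≥0∞) else 1) := by
        rw [count_sum m 0 (by omega), count_sum m (m + 1) (by omega)]
    _ = (∑ i ∈ Finset.range (m + 2), ccST m ((i : Fin (m + 2)))) +
          ∑ i ∈ Finset.range (m + 2), ccST m (((i + 1 : ℕ) : Fin (m + 2))) := by
        congr 1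
        · refine Finset.sum_congr rfl fun i hi => ?_
          have hi2 : i < m + 2 := Finset.mem_range.mp hi
          unfold ccST
          congr 1
          simp only [eq_iff_iff, Fin.natCast_eq_zero]
          constructor
          · intro h; subst h; exact dvd_zero _
          · intro h; exact Nat.eq_zero_of_dvd_of_lt h hi2
        · refine Finset.sum_congr rfl fun i hi => ?_
          have hi2 : i < m + 2 := Finset.mem_range.mp hi
          unfold ccST
          congr 1
          simp only [eq_iff_iff, Fin.natCast_eq_zero]
          constructor
          · intro h; subst h; exact dvd_refl _
          · intro h
            have h1 : m + 2 ≤ i + 1 := Nat.le_of_dvd (by omega) h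
            omega
    _ = ∑ i ∈ Finset.range (m + 2),
          (ccST m ((i : Fin (m + 2))) + ccST m (((i + 1 : ℕ) : Fin (m + 2)))) :=
        Finset.sum_add_distrib.symm
    _ = ∑ i ∈ Finset.Ico 0 (m + 2),
          llST m ((i : Fin (m + 2))) (((i + 1 : ℕ) : Fin (m + 2))) := by
        rw [Finset.range_eq_Ico]
        exact Finset.sum_congr rfl fun i _ => (hterm i).symm

/-- For every n ≥ 2 there is a metric graph on n vertices such that the infinite walk
obtained by repeating a shortest TSP tour has cost at least (n-1)·OPT. -/
theorem tsp_tour_bad_approximation (m : ℕ) :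
    ∃ (l : Fin (m + 2) → Fin (m + 2) → ℝ≥0∞) (φ : Fin (m + 2) → ℝ≥0∞)
      (e : Fin (m + 2) ≃ Fin (m + 2)),
      (∀ v, l v v = 0) ∧ (∀ u v, l u v = l v u) ∧
      (∀ u v w, l u w ≤ l u v + l v w) ∧
      (∀ u v, u ≠ v → 0 < l u v ∧ l u v ≠ ⊤) ∧
      (∀ v, 0 < φ v ∧ φ v ≤ 1) ∧
      (∀ e' : Fin (m + 2) ≃ Fin (m + 2),
        ∑ i : Fin (m + 2), l (e i) (e (i + 1)) ≤ ∑ i : Fin (m + 2), l (e' i) (e' (i + 1))) ∧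
      ((m + 1 : ℝ≥0∞)) * OPT l φ ≤
        walkCost l φ (fun i : ℕ => e (Fin.ofNat (m + 2) i)) := by
  classical
  set φ : Fin (m + 2) → ℝ≥0∞ :=
    fun v => if v = 0 then 1 else ((2 * (m + 1) : ℕ) : ℝ≥0∞)⁻¹ with hφ
  refine ⟨llST m, φ, Equiv.refl _, ?_, ?_, ?_, ?_, ?_, ?_, ?_⟩
  · intro v; simp [llST]
  · intro u v
    unfold llST
    by_cases h : u = v
    · subst h; simp
    · rw [if_neg h, if_neg (Ne.symm h), add_comm]
  · intro u v w
    unfold llST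
    by_cases huw : u = w
    · rw [if_pos huw]; exact zero_le
    · rw [if_neg huw]
      by_cases huv : u = v
      · subst huv; rw [if_pos rfl, zero_add, if_neg huw]
      · by_cases hvw : v = w
        · subst hvw; rw [if_pos rfl, add_zero, if_neg huv]
        · rw [if_neg huv, if_neg hvw]
          exact add_le_add le_self_add le_add_self
  · intro u v h
    rw [llST_ne m h]
    constructor
    · unfold ccST
      by_cases hu : u = 0
      · have hv : v ≠ 0 := fun h' => h (hu.trans h'.symm)
        rw [if_pos hu, if_neg hv]; norm_num
      · rw [if_neg hu]
        exact lt_of_lt_of_le zero_lt_one le_self_add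
    · have hle : ccST m u + ccST m v ≤ (1 : ℝ≥0∞) + 1 :=
        add_le_add (ccST_le_one m u) (ccST_le_one m v)
      exact ne_top_of_le_ne_top (by norm_num) hle
  · intro v
    by_cases hv : v = 0
    · simp [hφ, hv]
    · rw [hφ]; simp only [if_neg hv]
      constructor
      · rw [ENNReal.inv_pos]
        exact ENNReal.natCast_ne_top _
      · rw [ENNReal.inv_le_one]
        exact_mod_cast Nat.one_le_iff_ne_zero.mpr (by omega)
  · intro e'
    rw [tour_sum m (Equiv.refl _), tour_sum m e']
  · have hOPT : OPT (llST m) φ ≤ 2 := by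
      refine le_trans ?_ (walkCost_good_le m φ (by simp [hφ])
        (fun v hv => by rw [hφ]; simp only [if_neg hv]))
      unfold OPT
      exact iInf₂_le _ (Wgood_visits m)
    have hcost : ((m : ℝ≥0∞) + 1) * 2 ≤
        walkCost (llST m) φ (fun i : ℕ => (i : Fin (m + 2))) := by
      refine le_trans ?_ (le_iSup _ (0 : Fin (m + 2)))
      have hφ0 : φ 0 = 1 := by simp [hφ]
      rw [hφ0, one_mul]
      unfold latency
      refine le_trans ?_ (le_iSup₂ (0 : ℕ) (by simp : ((0 : ℕ) : Fin (m + 2)) = 0))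
      refine le_iInf₂ fun b hb => ?_
      obtain ⟨hb0, hbz⟩ := hb
      have hdvd : (m + 2) ∣ b := Fin.natCast_eq_zero.mp hbz
      have hble : m + 2 ≤ b := Nat.le_of_dvd hb0 hdvd
      refine le_trans (tour_walk_len m) ?_
      unfold walkLen
      exact Finset.sum_le_sum_of_subset (Finset.Ico_subset_Ico le_rfl hble)
    calc ((m : ℝ≥0∞) + 1) * OPT (llST m) φ
        ≤ ((m : ℝ≥0∞) + 1) * 2 := mul_le_mul_right hOPT _
      _ ≤ _ := hcost
end

section
/- Let G' be a weight-relaxed graph (all weights are powers of 1/2) and let S = [S_1, ..., S_t] be a binary walk with binary decomposition (S_1, ..., S_t). If a and b are the indices of two consecutive visits to a vertex v of weight 1/2^i in the infinite expansion Δ(S), then the sub-walk Δ(S)(a,b) intersects at most 2^{i+1} members of (S_1, ..., S_t). -/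
open scoped ENNReal BigOperators

/-- In the infinite expansion of a binary walk (encoded via a block-assignment function β
with period t), any sub-walk between two consecutive visits to a vertex of weight 1/2^i
intersects at most 2^(i+1) members of the binary decomposition. -/
theorem binary_walk_block_bound {V : Type*} (φ : V → ℝ≥0∞)
    (hpow : ∀ u : V, ∃ x : ℕ, φ u = (1/2 : ℝ≥0∞) ^ x)
    (W : ℕ → V) (β : ℕ → ℕ) (t p : ℕ) (ht : 0 < t) (hp : 0 < p)
    (hβ0 : β 0 = 0) (hmono : Monotone β) (hstep : ∀ i, β (i + 1) ≤ β i + 1)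
    (hper : ∀ i, W (i + p) = W i ∧ β (i + p) = β i + t)
    (hbin : ∀ (u : V) (x : ℕ), φ u = (1/2 : ℝ≥0∞) ^ x →
      2 ^ x ≤ t ∧ ∀ j : ℕ, ∃! a : ℕ, W a = u ∧ j * 2 ^ x ≤ β a ∧ β a < (j + 1) * 2 ^ x)
    (v : V) (i : ℕ) (hv : φ v = (1/2 : ℝ≥0∞) ^ i)
    (a b : ℕ) (hab : a < b) (ha : W a = v) (hb : W b = v)
    (hcons : ∀ c, a < c → c < b → W c ≠ v) :
    β b + 1 - β a ≤ 2 ^ (i + 1) := by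
  obtain ⟨-, huniq⟩ := hbin v i hv
  have hP : 0 < 2 ^ i := Nat.pow_pos (by norm_num)
  set j := β a / 2 ^ i with hj
  have hja : j * 2 ^ i ≤ β a := Nat.div_mul_le_self _ _
  obtain ⟨a', ⟨ha', h1, h2⟩, -⟩ := huniq (j + 1)
  have hmod := Nat.div_add_mod (β a) (2 ^ i)
  have e0 : 2 ^ i * (β a / 2 ^ i) = j * 2 ^ i := by rw [hj]; ring
  have hmlt := Nat.mod_lt (β a) hP
  have e1 : (j + 1) * 2 ^ i = j * 2 ^ i + 2 ^ i := by ring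
  have e2 : (j + 1 + 1) * 2 ^ i = j * 2 ^ i + 2 ^ i + 2 ^ i := by ring
  have hβa : β a < (j + 1) * 2 ^ i := by omega
  have haa' : a < a' := by
    by_contra h
    push_neg at h
    exact absurd (hmono h) (by omega)
  have hba' : b ≤ a' := by
    by_contra h
    push_neg at h
    exact hcons a' haa' h ha'
  have hβb : β b ≤ β a' := hmono hba'
  have e3 : (2:ℕ) ^ (i+1) = 2 ^ i + 2 ^ i := by ring
  omega
end

section
/- For every k ≥ 1 and n divisible by 4, there exists a metric graph G on n vertices such that any closed walk whose infinite expansion has cost at most k·OPT_G must have size at least n²/(4k); hence any algorithm with guaranteed output size O(n²/k) has approximation factor Ω(k). -/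
open scoped ENNReal BigOperators

set_option maxHeartbeats 1000000

namespace SWBA

variable (m k : ℕ)

/-- weights defining the metric: heavy vertices (val < 2m) have weight 1,
light vertices have weight 2mk+1. -/
def wt (v : Fin (4*m)) : ℕ := if v.val < 2*m then 1 else 2*m*k+1

noncomputable def lf (u v : Fin (4*m)) : ℝ≥0∞ :=
  if u = v then 0 else ((wt m k u + wt m k v : ℕ) : ℝ≥0∞)

noncomputable def ph (v : Fin (4*m)) : ℝ≥0∞ :=
  if v.val < 2*m then 1 else (((2*m : ℕ) : ℝ≥0∞))⁻¹

lemma wt_ge_one (u : Fin (4*m)) : 1 ≤ wt m k u := by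
  unfold wt; split_ifs <;> omega

lemma wt_le (u : Fin (4*m)) : wt m k u ≤ 2*m*k+1 := by
  unfold wt; split_ifs <;> omega

lemma lf_self (v : Fin (4*m)) : lf m k v v = 0 := by simp [lf]

lemma lf_symm (u v : Fin (4*m)) : lf m k u v = lf m k v u := by
  unfold lf
  rcases eq_or_ne u v with h | h
  · simp [h]
  · rw [if_neg h, if_neg (Ne.symm h), Nat.add_comm]

lemma lf_triangle (u v w : Fin (4*m)) : lf m k u w ≤ lf m k u v + lf m k v w := by
  rcases eq_or_ne u w with rfl | huw
  · simp [lf_self]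
  rcases eq_or_ne u v with rfl | huv
  · simp [lf_self]
  rcases eq_or_ne v w with rfl | hvw
  · simp [lf_self]
  unfold lf
  rw [if_neg huw, if_neg huv, if_neg hvw, ← Nat.cast_add]
  exact Nat.cast_le.2 (by have := wt_ge_one m k v; omega)

lemma lf_pos {u v : Fin (4*m)} (h : u ≠ v) : 0 < lf m k u v ∧ lf m k u v ≠ ⊤ := by
  unfold lf
  rw [if_neg h]
  constructor
  · exact_mod_cast Nat.pos_of_ne_zero (by have := wt_ge_one m k u; omega)
  · exact ENNReal.natCast_ne_top _

lemma ph_pos_le (hm : 0 < m) (v : Fin (4*m)) : 0 < ph m v ∧ ph m v ≤ 1 := by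
  unfold ph
  split_ifs
  · exact ⟨zero_lt_one, le_refl _⟩
  · constructor
    · exact ENNReal.inv_pos.2 (ENNReal.natCast_ne_top _)
    · exact ENNReal.inv_le_one.2 (by exact_mod_cast Nat.one_le_iff_ne_zero.2 (by omega))

/-- the optimal-ish walk: rounds of length 2m+1: all 2m heavy vertices then one light vertex. -/
def W0 (hm : 0 < m) (i : ℕ) : Fin (4*m) :=
  if h : i % (2*m+1) < 2*m then ⟨i % (2*m+1), by omega⟩
  else ⟨2*m + (i / (2*m+1)) % (2*m), by
    have := Nat.mod_lt (i / (2*m+1)) (show 0 < 2*m by omega); omega⟩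

/-- upper bound on edge lengths along W0 -/
def g (i : ℕ) : ℕ := if 2*m-1 ≤ i % (2*m+1) then 2*m*k+2 else 2

lemma g_periodic (i : ℕ) : g m k (i + (2*m+1)) = g m k i := by
  unfold g; rw [Nat.add_mod_right]


/-! ### generic helpers -/

lemma mod_window_inj {p a x y : ℕ} (hx : a ≤ x) (hx2 : x < a + p) (hy : a ≤ y)
    (hy2 : y < a + p) (h : x % p = y % p) : x = y := by
  have h1 := Nat.div_add_mod x p
  have h2 := Nat.div_add_mod y p
  have hp : 0 < p := by omega
  rcases (by omega : x / p = y / p ∨ x / p + 1 ≤ y / p ∨ y / p + 1 ≤ x / p) with h3 | h3 | h3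
  · rw [h3] at h1; omega
  · have : p * (x/p) + p ≤ p * (y/p) := by nlinarith
    omega
  · have : p * (y/p) + p ≤ p * (x/p) := by nlinarith
    omega

lemma periodic_iter {V : Type*} {W : ℕ → V} {p : ℕ} (hper : ∀ i, W (i + p) = W i) :
    ∀ c i, W (i + c * p) = W i := by
  intro c
  induction c with
  | zero => intro i; simp
  | succ c ih =>
    intro i
    have : i + (c+1) * p = (i + c * p) + p := by ring
    rw [this, hper, ih]

lemma periodic_mod {V : Type*} {W : ℕ → V} {p : ℕ} (hp : 0 < p)
    (hper : ∀ i, W (i + p) = W i) (x : ℕ) : W x = W (x % p) := by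
  conv_lhs => rw [← Nat.mod_add_div' x p]
  exact periodic_iter hper _ _

/-- locate x in the chain f -/
lemma chain_locate {f : ℕ → ℕ} (hf : ∀ j, f j < f (j+1)) {x J : ℕ}
    (h0 : f 0 ≤ x) (hJ : x < f J) : ∃ j, j < J ∧ f j ≤ x ∧ x < f (j+1) := by
  have hsm : StrictMono f := strictMono_nat_of_lt_succ hf
  have hex : ∃ j, x < f j := ⟨J, hJ⟩
  set jj := Nat.find hex with hjj
  have hjx : x < f jj := Nat.find_spec hex
  have hjj1 : 1 ≤ jj := by
    rcases Nat.eq_zero_or_pos jj with h | h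
    · exfalso; rw [h] at hjx; omega
    · exact h
  refine ⟨jj - 1, ?_, ?_, ?_⟩
  · have : f (jj - 1) ≤ x := by
      have := Nat.find_min hex (m := jj - 1) (by omega)
      omega
    have hlt : f (jj-1) < f J := by omega
    have := hsm.lt_iff_lt.1 hlt
    omega
  · have := Nat.find_min hex (m := jj - 1) (by omega)
    omega
  · have : jj - 1 + 1 = jj := by omega
    rw [this]; exact hjx

lemma card_filter_lt (nn c : ℕ) (h : c ≤ nn) :
    ((Finset.univ : Finset (Fin nn)).filter (fun v => v.val < c)).card = c := by
  classical
  rw [show (Finset.univ : Finset (Fin nn)).filter (fun v => v.val < c)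
      = Finset.map ⟨Fin.castLE h, Fin.castLE_injective h⟩ Finset.univ from ?_]
  · simp
  · ext v
    simp only [Finset.mem_filter, Finset.mem_univ, true_and, Finset.mem_map,
      Function.Embedding.coeFn_mk]
    constructor
    · intro hv; exact ⟨⟨v.val, hv⟩, rfl⟩
    · rintro ⟨u, rfl⟩; exact u.isLt


/-! ### sums of g over windows -/

lemma gsum_shift : ∀ a, ∑ i ∈ Finset.Ico a (a + (2*m+1)), g m k i
    = ∑ i ∈ Finset.Ico 0 (2*m+1), g m k i := by
  intro a
  induction a with
  | zero => simp
  | succ a ih =>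
    have h1 : ∑ i ∈ Finset.Ico a (a + (2*m+1) + 1), g m k i
        = ∑ i ∈ Finset.Ico a (a + (2*m+1)), g m k i + g m k (a + (2*m+1)) :=
      Finset.sum_Ico_succ_top (by omega) _
    have h2 : ∑ i ∈ Finset.Ico a (a + (2*m+1) + 1), g m k i
        = g m k a + ∑ i ∈ Finset.Ico (a+1) (a + (2*m+1) + 1), g m k i :=
      Finset.sum_eq_sum_Ico_succ_bot (by omega) _
    have h3 : a + (2*m+1) + 1 = (a+1) + (2*m+1) := by omega
    rw [g_periodic] at h1
    rw [h3] at h1 h2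
    omega

lemma gsum0 (hm : 0 < m) : ∑ i ∈ Finset.Ico 0 (2*m+1), g m k i = 4*m*k + 4*m + 2 := by
  have hsplit : ∑ i ∈ Finset.Ico 0 (2*m-1), g m k i + ∑ i ∈ Finset.Ico (2*m-1) (2*m+1), g m k i
      = ∑ i ∈ Finset.Ico 0 (2*m+1), g m k i :=
    Finset.sum_Ico_consecutive _ (by omega) (by omega)
  have h1 : ∑ i ∈ Finset.Ico 0 (2*m-1), g m k i = (2*m-1) * 2 := by
    have hc : ∀ i ∈ Finset.Ico 0 (2*m-1), g m k i = 2 := by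
      intro i hi
      simp only [Finset.mem_Ico] at hi
      unfold g
      rw [Nat.mod_eq_of_lt (by omega), if_neg (by omega)]
    rw [Finset.sum_congr rfl hc, Finset.sum_const, Nat.card_Ico, smul_eq_mul]
    omega
  have h2 : ∑ i ∈ Finset.Ico (2*m-1) (2*m+1), g m k i = 2 * (2*m*k+2) := by
    have hc : ∀ i ∈ Finset.Ico (2*m-1) (2*m+1), g m k i = 2*m*k+2 := by
      intro i hi
      simp only [Finset.mem_Ico] at hi
      unfold g
      rw [Nat.mod_eq_of_lt (by omega), if_pos (by omega)]
    rw [Finset.sum_congr rfl hc, Finset.sum_const, Nat.card_Ico, smul_eq_mul]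
    congr 1
    omega
  have hmk : (2*m-1) * 2 + 2 * (2*m*k+2) = 4*m*k + 4*m + 2 := by
    have : 2*(2*m*k) = 4*m*k := by ring
    omega
  omega

lemma gsum_window (hm : 0 < m) (a : ℕ) :
    ∑ i ∈ Finset.Ico a (a + (2*m+1)), g m k i = 4*m*k + 4*m + 2 := by
  rw [gsum_shift, gsum0 m k hm]

lemma gsum_mult (hm : 0 < m) (a : ℕ) : ∀ c,
    ∑ i ∈ Finset.Ico a (a + c*(2*m+1)), g m k i = c * (4*m*k + 4*m + 2) := by
  intro c
  induction c with
  | zero => simp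
  | succ c ih =>
    have hsplit : ∑ i ∈ Finset.Ico a (a + c*(2*m+1)), g m k i
        + ∑ i ∈ Finset.Ico (a + c*(2*m+1)) (a + (c+1)*(2*m+1)), g m k i
        = ∑ i ∈ Finset.Ico a (a + (c+1)*(2*m+1)), g m k i :=
      Finset.sum_Ico_consecutive _ (by nlinarith) (by nlinarith)
    have h2 : a + (c+1)*(2*m+1) = (a + c*(2*m+1)) + (2*m+1) := by ring
    rw [← hsplit, ih, h2]
    rw [gsum_window m k hm]
    ring

/-! ### structure of W0 -/

lemma W0_val_heavy (hm : 0 < m) {i : ℕ} (h : i % (2*m+1) < 2*m) :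
    (W0 m hm i).val = i % (2*m+1) := by
  unfold W0; rw [dif_pos h]

lemma W0_val_light (hm : 0 < m) {i : ℕ} (h : ¬ i % (2*m+1) < 2*m) :
    (W0 m hm i).val = 2*m + (i / (2*m+1)) % (2*m) := by
  unfold W0; rw [dif_neg h]

lemma W0_heavy_iff (hm : 0 < m) (i : ℕ) :
    (W0 m hm i).val < 2*m ↔ i % (2*m+1) < 2*m := by
  constructor
  · intro h
    by_contra hc
    rw [W0_val_light m hm hc] at h
    omega
  · intro h
    rw [W0_val_heavy m hm h]; exact h

lemma succ_mod (i : ℕ) (hm : 0 < m) (h : i % (2*m+1) < 2*m) :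
    (i+1) % (2*m+1) = i % (2*m+1) + 1 := by
  rw [Nat.add_mod, Nat.mod_eq_of_lt (show 1 < 2*m+1 by omega), Nat.mod_eq_of_lt (by omega)]

lemma lf_le_of_heavy (u v : Fin (4*m)) (h : u.val < 2*m ∨ v.val < 2*m) :
    lf m k u v ≤ ((2*m*k+2 : ℕ) : ℝ≥0∞) := by
  unfold lf
  split_ifs with he
  · exact zero_le
  · refine Nat.cast_le.2 ?_
    have h1 := wt_ge_one m k u
    have h2 := wt_le m k u
    have h3 := wt_ge_one m k v
    have h4 := wt_le m k v
    rcases h with h | h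
    · have : wt m k u = 1 := by unfold wt; rw [if_pos h]
      omega
    · have : wt m k v = 1 := by unfold wt; rw [if_pos h]
      omega

lemma lf_W0_le_g (hm : 0 < m) (i : ℕ) :
    lf m k (W0 m hm i) (W0 m hm (i+1)) ≤ ((g m k i : ℕ) : ℝ≥0∞) := by
  have hr : i % (2*m+1) < 2*m+1 := Nat.mod_lt _ (by omega)
  unfold g
  split_ifs with hg
  · -- g = E : one endpoint heavy
    rcases (by omega : i % (2*m+1) < 2*m ∨ i % (2*m+1) = 2*m) with h | h
    · exact lf_le_of_heavy m k _ _ (Or.inl (by rw [W0_heavy_iff]; exact h))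
    · refine lf_le_of_heavy m k _ _ (Or.inr ?_)
      rw [W0_heavy_iff]
      have : (i+1) % (2*m+1) = 0 := by
        rw [Nat.add_mod, h]
        simp [Nat.mod_eq_of_lt]
      omega
  · -- both heavy consecutive: length ≤ 2
    have h1 : i % (2*m+1) < 2*m := by omega
    have h2 : (i+1) % (2*m+1) = i % (2*m+1) + 1 := succ_mod m i hm h1
    have h3 : (i+1) % (2*m+1) < 2*m := by omega
    unfold lf
    split_ifs with he
    · exact zero_le
    · refine Nat.cast_le.2 ?_
      have hu : wt m k (W0 m hm i) = 1 := by
        unfold wt; rw [if_pos (by rw [W0_heavy_iff]; exact h1)]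
      have hv : wt m k (W0 m hm (i+1)) = 1 := by
        unfold wt; rw [if_pos (by rw [W0_heavy_iff]; exact h3)]
      omega

/-! ### walkLen bounds for W0 -/

lemma walkLen_W0_le (hm : 0 < m) (a b : ℕ) :
    walkLen (lf m k) (W0 m hm) a b ≤ ((∑ i ∈ Finset.Ico a b, g m k i : ℕ) : ℝ≥0∞) := by
  rw [walkLen, Nat.cast_sum]
  exact Finset.sum_le_sum (fun i _ => lf_W0_le_g m k hm i)

lemma W0_ret_heavy (hm : 0 < m) {i : ℕ} (h : i % (2*m+1) < 2*m) :
    W0 m hm (i + (2*m+1)) = W0 m hm i := by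
  have hmod : (i + (2*m+1)) % (2*m+1) = i % (2*m+1) := Nat.add_mod_right _ _
  apply Fin.ext
  rw [W0_val_heavy m hm (by rw [hmod]; exact h), W0_val_heavy m hm h, hmod]

lemma W0_ret_full (hm : 0 < m) (i : ℕ) :
    W0 m hm (i + 2*m*(2*m+1)) = W0 m hm i := by
  have hmod : (i + 2*m*(2*m+1)) % (2*m+1) = i % (2*m+1) := Nat.add_mul_mod_self_right _ _ _
  have hdiv : (i + 2*m*(2*m+1)) / (2*m+1) = i / (2*m+1) + 2*m :=
    Nat.add_mul_div_right _ _ (by omega)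
  apply Fin.ext
  by_cases h : i % (2*m+1) < 2*m
  · rw [W0_val_heavy m hm (by rw [hmod]; exact h), W0_val_heavy m hm h, hmod]
  · rw [W0_val_light m hm (by rw [hmod]; exact h), W0_val_light m hm h, hdiv,
      Nat.add_mod_right]

lemma W0_vio (hm : 0 < m) : VisitsInfOften (W0 m hm) := by
  intro v N
  by_cases hv : v.val < 2*m
  · refine ⟨v.val + N*(2*m+1), ?_, ?_⟩
    · have : N ≤ N*(2*m+1) := Nat.le_mul_of_pos_right _ (by omega)
      omega
    · have hmod : (v.val + N*(2*m+1)) % (2*m+1) = v.val := by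
        rw [Nat.add_mul_mod_self_right, Nat.mod_eq_of_lt (by omega)]
      apply Fin.ext
      rw [W0_val_heavy m hm (by rw [hmod]; exact hv), hmod]
  · set c := v.val - 2*m + N*(2*m) with hc
    refine ⟨2*m + c*(2*m+1), ?_, ?_⟩
    · have h1 : N ≤ N*(2*m) := Nat.le_mul_of_pos_right _ (by omega)
      have h2 : c ≤ c*(2*m+1) := Nat.le_mul_of_pos_right _ (by omega)
      omega
    · have hmod : (2*m + c*(2*m+1)) % (2*m+1) = 2*m := by
        rw [Nat.add_mul_mod_self_right, Nat.mod_eq_of_lt (by omega)]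
      have hdiv : (2*m + c*(2*m+1)) / (2*m+1) = c := by
        rw [Nat.add_mul_div_right _ _ (show 0 < 2*m+1 by omega),
          Nat.div_eq_of_lt (by omega)]
        omega
      have hcm : c % (2*m) = v.val - 2*m := by
        rw [hc, Nat.add_mul_mod_self_right, Nat.mod_eq_of_lt (by omega)]
      apply Fin.ext
      rw [W0_val_light m hm (by rw [hmod]; omega), hdiv, hcm]
      omega

/-! ### cost of W0 -/

lemma latency_W0_heavy (hm : 0 < m) (v : Fin (4*m)) (hv : v.val < 2*m) :
    latency (lf m k) (W0 m hm) v ≤ ((4*m*k+4*m+2 : ℕ) : ℝ≥0∞) := by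
  rw [latency]
  refine iSup₂_le fun a ha => ?_
  have hav : a % (2*m+1) < 2*m := by
    rw [← W0_heavy_iff m hm, ha]; exact hv
  refine (iInf₂_le (a + (2*m+1)) ⟨by omega, by rw [W0_ret_heavy m hm hav, ha]⟩).trans ?_
  refine (walkLen_W0_le m k hm _ _).trans ?_
  exact le_of_eq (by rw [gsum_window m k hm])

lemma latency_W0_light (hm : 0 < m) (v : Fin (4*m)) :
    latency (lf m k) (W0 m hm) v ≤ ((2*m*(4*m*k+4*m+2) : ℕ) : ℝ≥0∞) := by
  rw [latency]
  refine iSup₂_le fun a ha => ?_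
  have hpos : 0 < 2*m*(2*m+1) := by positivity
  refine (iInf₂_le (a + 2*m*(2*m+1)) ⟨by omega, by rw [W0_ret_full m hm, ha]⟩).trans ?_
  refine (walkLen_W0_le m k hm _ _).trans ?_
  exact le_of_eq (by rw [gsum_mult m k hm])

lemma walkCost_W0_le (hm : 0 < m) :
    walkCost (lf m k) (ph m) (W0 m hm) ≤ ((4*m*k+4*m+2 : ℕ) : ℝ≥0∞) := by
  rw [walkCost]
  refine iSup_le fun v => ?_
  by_cases hv : v.val < 2*m
  · rw [ph, if_pos hv, one_mul]
    exact latency_W0_heavy m k hm v hv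
  · rw [ph, if_neg hv]
    calc (((2*m : ℕ) : ℝ≥0∞))⁻¹ * latency (lf m k) (W0 m hm) v
        ≤ (((2*m : ℕ) : ℝ≥0∞))⁻¹ * ((2*m*(4*m*k+4*m+2) : ℕ) : ℝ≥0∞) :=
          mul_le_mul_right (latency_W0_light m k hm v) _
      _ = ((4*m*k+4*m+2 : ℕ) : ℝ≥0∞) := by
          rw [Nat.cast_mul (2*m) (4*m*k+4*m+2), ← mul_assoc, ENNReal.inv_mul_cancel
            (by exact_mod_cast (by omega : 2*m ≠ 0) : ((2*m : ℕ) : ℝ≥0∞) ≠ 0)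
            (ENNReal.natCast_ne_top _), one_mul]

lemma OPT_le (hm : 0 < m) :
    OPT (lf m k) (ph m) ≤ ((4*m*k+4*m+2 : ℕ) : ℝ≥0∞) := by
  rw [OPT]
  exact (iInf₂_le (W0 m hm) (W0_vio m hm)).trans (walkCost_W0_le m k hm)

/-! ### the segment counting lemma -/

open Classical in
lemma seg_card (hm : 0 < m) (W : ℕ → Fin (4*m)) (a b : ℕ)
    (ha : (W a).val < 2*m) (hb : W b = W a)
    (hlen : walkLen (lf m k) W a b < ((2*(2*m*k+1)*(k+1) : ℕ) : ℝ≥0∞)) :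
    (Finset.univ.filter
      (fun u : Fin (4*m) => ¬ u.val < 2*m ∧ ∃ i ∈ Finset.Ico a b, W i = u)).card ≤ k := by
  classical
  set S := Finset.univ.filter
      (fun u : Fin (4*m) => ¬ u.val < 2*m ∧ ∃ i ∈ Finset.Ico a b, W i = u) with hS
  set VS : Fin (4*m) → Finset ℕ := fun u => (Finset.Ico a b).filter (fun i => W i = u) with hVS
  have hmemVS : ∀ u i, i ∈ VS u ↔ (a ≤ i ∧ i < b ∧ W i = u) := by
    intro u i
    rw [hVS]
    simp only [Finset.mem_filter, Finset.mem_Ico]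
    tauto
  have hSfact : ∀ u ∈ S, ¬ u.val < 2*m ∧ (VS u).Nonempty := by
    intro u hu
    rw [hS, Finset.mem_filter] at hu
    obtain ⟨-, hl, i, hi, hWi⟩ := hu
    exact ⟨hl, ⟨i, by rw [hmemVS]; simp only [Finset.mem_Ico] at hi; exact ⟨hi.1, hi.2, hWi⟩⟩⟩
  set x : Fin (4*m) → ℕ := fun u => if h : (VS u).Nonempty then (VS u).max' h else 0 with hx
  set e : Fin (4*m) → ℕ := fun u => if h : (VS u).Nonempty then (VS u).min' h else 0 with he
  have hxmem : ∀ u ∈ S, x u ∈ VS u := by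
    intro u hu; rw [hx]; simp only; rw [dif_pos (hSfact u hu).2]; exact Finset.max'_mem _ _
  have hxmax : ∀ u ∈ S, ∀ i ∈ VS u, i ≤ x u := by
    intro u hu i hi; rw [hx]; simp only; rw [dif_pos (hSfact u hu).2]
    exact Finset.le_max' _ _ hi
  have hemem : ∀ u ∈ S, e u ∈ VS u := by
    intro u hu; rw [he]; simp only; rw [dif_pos (hSfact u hu).2]; exact Finset.min'_mem _ _
  have hemin : ∀ u ∈ S, ∀ i ∈ VS u, e u ≤ i := by
    intro u hu i hi; rw [he]; simp only; rw [dif_pos (hSfact u hu).2]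
    exact Finset.min'_le _ _ hi
  have hWa : ∀ u ∈ S, W a ≠ u := by
    intro u hu heq
    have := (hSfact u hu).1
    rw [heq] at ha; exact this ha
  have hea : ∀ u ∈ S, a < e u := by
    intro u hu
    have h1 := (hmemVS u (e u)).1 (hemem u hu)
    rcases Nat.lt_or_ge a (e u) with h | h
    · exact h
    · exfalso
      have : e u = a := by omega
      exact hWa u hu (by rw [← this]; exact h1.2.2)
  -- edge lower bound functions
  set d1 : ℕ → ℝ≥0∞ := fun j =>
    if ¬ (W j).val < 2*m ∧ W j ≠ W (j+1) then ((2*m*k+1 : ℕ) : ℝ≥0∞) else 0 with hd1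
  set d2 : ℕ → ℝ≥0∞ := fun j =>
    if ¬ (W (j+1)).val < 2*m ∧ W j ≠ W (j+1) then ((2*m*k+1 : ℕ) : ℝ≥0∞) else 0 with hd2
  have hpoint : ∀ j, d1 j + d2 j ≤ lf m k (W j) (W (j+1)) := by
    intro j
    simp only [hd1, hd2]
    by_cases heq : W j = W (j+1)
    · rw [if_neg (by tauto), if_neg (by tauto), lf, if_pos heq]
      simp
    · rw [lf, if_neg heq]
      have h1 : (if ¬ (W j).val < 2*m ∧ W j ≠ W (j+1) then ((2*m*k+1 : ℕ) : ℝ≥0∞) else 0)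
          ≤ ((wt m k (W j) : ℕ) : ℝ≥0∞) := by
        split_ifs with h
        · exact Nat.cast_le.2 (by unfold wt; rw [if_neg h.1])
        · exact zero_le
      have h2 : (if ¬ (W (j+1)).val < 2*m ∧ W j ≠ W (j+1) then ((2*m*k+1 : ℕ) : ℝ≥0∞) else 0)
          ≤ ((wt m k (W (j+1)) : ℕ) : ℝ≥0∞) := by
        split_ifs with h
        · exact Nat.cast_le.2 (by unfold wt; rw [if_neg h.1])
        · exact zero_le
      exact (add_le_add h1 h2).trans_eq (Nat.cast_add _ _).symm
  have hsum1 : ((2*m*k+1 : ℕ) : ℝ≥0∞) * S.card ≤ ∑ j ∈ Finset.Ico a b, d1 j := by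
    have himg : S.image x ⊆ Finset.Ico a b := by
      intro j hj
      obtain ⟨u, hu, rfl⟩ := Finset.mem_image.1 hj
      have := (hmemVS u (x u)).1 (hxmem u hu)
      exact Finset.mem_Ico.2 ⟨this.1, this.2.1⟩
    have hval : ∀ j ∈ S.image x, d1 j = ((2*m*k+1 : ℕ) : ℝ≥0∞) := by
      intro j hj
      obtain ⟨u, hu, rfl⟩ := Finset.mem_image.1 hj
      have hux := (hmemVS u (x u)).1 (hxmem u hu)
      simp only [hd1]
      rw [if_pos]
      refine ⟨by rw [hux.2.2]; exact (hSfact u hu).1, ?_⟩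
      rw [hux.2.2]
      intro hWnext
      rcases Nat.lt_or_ge (x u + 1) b with h | h
      · have : x u + 1 ∈ VS u := (hmemVS u _).2 ⟨by omega, h, hWnext.symm⟩
        have := hxmax u hu _ this
        omega
      · have hxb : x u + 1 = b := by omega
        apply hWa u hu
        rw [← hb, ← hxb, ← hWnext]
    have hinj : Set.InjOn x S := by
      intro u1 h1 u2 h2 hxx
      have e1 := ((hmemVS u1 (x u1)).1 (hxmem u1 h1)).2.2
      have e2 := ((hmemVS u2 (x u2)).1 (hxmem u2 h2)).2.2
      rw [← e1, ← e2, hxx]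
    calc ((2*m*k+1 : ℕ) : ℝ≥0∞) * S.card
        = ∑ j ∈ S.image x, ((2*m*k+1 : ℕ) : ℝ≥0∞) := by
          rw [Finset.sum_const, Finset.card_image_of_injOn hinj, nsmul_eq_mul, mul_comm]
      _ = ∑ j ∈ S.image x, d1 j := (Finset.sum_congr rfl (fun j hj => (hval j hj).symm))
      _ ≤ ∑ j ∈ Finset.Ico a b, d1 j := Finset.sum_le_sum_of_subset himg
  have hsum2 : ((2*m*k+1 : ℕ) : ℝ≥0∞) * S.card ≤ ∑ j ∈ Finset.Ico a b, d2 j := by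
    set e' : Fin (4*m) → ℕ := fun u => e u - 1 with he'
    have he'succ : ∀ u ∈ S, e' u + 1 = e u := by
      intro u hu
      have h1 := hea u hu
      show e u - 1 + 1 = e u
      omega
    have himg : S.image e' ⊆ Finset.Ico a b := by
      intro j hj
      obtain ⟨u, hu, rfl⟩ := Finset.mem_image.1 hj
      have hue := (hmemVS u (e u)).1 (hemem u hu)
      have := hea u hu
      have hs := he'succ u hu
      refine Finset.mem_Ico.2 ⟨by omega, by omega⟩
    have hval : ∀ j ∈ S.image e', d2 j = ((2*m*k+1 : ℕ) : ℝ≥0∞) := by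
      intro j hj
      obtain ⟨u, hu, rfl⟩ := Finset.mem_image.1 hj
      have hue := (hmemVS u (e u)).1 (hemem u hu)
      have hsucc := he'succ u hu
      simp only [hd2]
      rw [hsucc, if_pos]
      refine ⟨by rw [hue.2.2]; exact (hSfact u hu).1, ?_⟩
      rw [hue.2.2]
      intro hWprev
      have hmem : e' u ∈ VS u := by
        refine (hmemVS u _).2 ⟨?_, ?_, hWprev⟩
        · have h1 := hea u hu; omega
        · have h1 := hue.2.1; omega
      have h2 := hemin u hu _ hmem
      omega
    have hinj : Set.InjOn e' S := by
      intro u1 h1 u2 h2 hxx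
      have e1 := ((hmemVS u1 (e u1)).1 (hemem u1 h1)).2.2
      have e2 := ((hmemVS u2 (e u2)).1 (hemem u2 h2)).2.2
      have s1 := he'succ u1 h1
      have s2 := he'succ u2 h2
      rw [← e1, ← e2, ← s1, ← s2, hxx]
    calc ((2*m*k+1 : ℕ) : ℝ≥0∞) * S.card
        = ∑ j ∈ S.image e', ((2*m*k+1 : ℕ) : ℝ≥0∞) := by
          rw [Finset.sum_const, Finset.card_image_of_injOn hinj, nsmul_eq_mul, mul_comm]
      _ = ∑ j ∈ S.image e', d2 j := (Finset.sum_congr rfl (fun j hj => (hval j hj).symm))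
      _ ≤ ∑ j ∈ Finset.Ico a b, d2 j := Finset.sum_le_sum_of_subset himg
  have hkey : ((2*(2*m*k+1)*S.card : ℕ) : ℝ≥0∞) ≤ walkLen (lf m k) W a b := by
    calc ((2*(2*m*k+1)*S.card : ℕ) : ℝ≥0∞)
        = ((2*m*k+1 : ℕ) : ℝ≥0∞) * S.card + ((2*m*k+1 : ℕ) : ℝ≥0∞) * S.card := by
          push_cast; ring
      _ ≤ ∑ j ∈ Finset.Ico a b, d1 j + ∑ j ∈ Finset.Ico a b, d2 j := add_le_add hsum1 hsum2
      _ = ∑ j ∈ Finset.Ico a b, (d1 j + d2 j) := (Finset.sum_add_distrib).symm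
      _ ≤ walkLen (lf m k) W a b := by
          rw [walkLen]
          exact Finset.sum_le_sum (fun j _ => hpoint j)
  have hnat : 2*(2*m*k+1)*S.card < 2*(2*m*k+1)*(k+1) := by
    have := hkey.trans_lt hlen
    exact_mod_cast this
  have := Nat.lt_of_mul_lt_mul_left hnat
  omega

/-! ### the main counting lemma -/

lemma main_count (hm : 0 < m) (hk : 1 ≤ k) (W : ℕ → Fin (4*m)) (p : ℕ) (hp : 0 < p)
    (hper : ∀ i, W (i + p) = W i) (hvio : VisitsInfOften W)
    (hcost : walkCost (lf m k) (ph m) W ≤ (k : ℝ≥0∞) * OPT (lf m k) (ph m)) :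
    (4*m) ^ 2 ≤ 4 * k * p := by
  classical
  have hWC : walkCost (lf m k) (ph m) W ≤ ((k*(4*m*k+4*m+2) : ℕ) : ℝ≥0∞) := by
    refine hcost.trans ?_
    rw [Nat.cast_mul]
    exact mul_le_mul_right (OPT_le m k hm) _
  have hBlt : (k*(4*m*k+4*m+2) : ℕ) < 2*(2*m*k+1)*(k+1) := by
    have h : 2*(2*m*k+1)*(k+1) = k*(4*m*k+4*m+2) + 2 := by ring
    omega
  have hstep : ∀ v : Fin (4*m), v.val < 2*m → ∀ a, W a = v →
      ∃ b, a < b ∧ W b = v ∧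
        walkLen (lf m k) W a b < ((2*(2*m*k+1)*(k+1) : ℕ) : ℝ≥0∞) := by
    intro v hv a ha
    have hlat : latency (lf m k) W v ≤ ((k*(4*m*k+4*m+2) : ℕ) : ℝ≥0∞) := by
      have h1 : ph m v * latency (lf m k) W v ≤ walkCost (lf m k) (ph m) W :=
        le_iSup (fun v => ph m v * latency (lf m k) W v) v
      rw [ph, if_pos hv, one_mul] at h1
      exact h1.trans hWC
    rw [latency] at hlat
    have hinf : (⨅ (b : ℕ) (_ : a < b ∧ W b = v), walkLen (lf m k) W a b)
        < ((2*(2*m*k+1)*(k+1) : ℕ) : ℝ≥0∞) := by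
      refine lt_of_le_of_lt ?_ (lt_of_le_of_lt hlat (Nat.cast_lt.2 hBlt))
      exact le_iSup₂ (f := fun a' (_ : W a' = v) =>
        ⨅ (b : ℕ) (_ : a' < b ∧ W b = v), walkLen (lf m k) W a' b) a ha
    simp only [iInf_lt_iff] at hinf
    obtain ⟨b, ⟨h1, h2⟩, hlt⟩ := hinf
    exact ⟨b, h1, h2, hlt⟩
  have hcount : ∀ v : Fin (4*m), v.val < 2*m →
      2*m ≤ k * ((Finset.range p).filter (fun i => W i = v)).card := by
    intro v hv
    obtain ⟨a0, -, ha0⟩ := hvio v 0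
    choose! g hg1 hg2 hg3 using hstep v hv
    set f : ℕ → ℕ := fun j => g^[j] a0 with hf
    have hfv : ∀ j, W (f j) = v := by
      intro j
      induction j with
      | zero => exact ha0
      | succ j ih =>
        show W (g^[j+1] a0) = v
        rw [Function.iterate_succ_apply']
        exact hg2 _ ih
    have hmono : ∀ j, f j < f (j+1) := by
      intro j
      show f j < g^[j+1] a0
      rw [Function.iterate_succ_apply']
      exact hg1 _ (hfv j)
    have hlen : ∀ j, walkLen (lf m k) W (f j) (f (j+1))
        < ((2*(2*m*k+1)*(k+1) : ℕ) : ℝ≥0∞) := by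
      intro j
      have h : f (j+1) = g (f j) := Function.iterate_succ_apply' g j a0
      rw [h]
      exact hg3 _ (hfv j)
    have hf0 : f 0 = a0 := rfl
    have hflb : ∀ j, a0 + j ≤ f j := by
      intro j
      induction j with
      | zero => omega
      | succ j ih => have := hmono j; omega
    have hexJ : ∃ j, a0 + p ≤ f j := ⟨p, hflb p⟩
    set J := Nat.find hexJ with hJ
    have hJspec : a0 + p ≤ f J := Nat.find_spec hexJ
    have hJmin : ∀ j, j < J → f j < a0 + p := by
      intro j hj
      have := Nat.find_min hexJ hj
      omega
    set SS : ℕ → Finset (Fin (4*m)) := fun j => Finset.univ.filter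
      (fun u : Fin (4*m) => ¬ u.val < 2*m ∧ ∃ i ∈ Finset.Ico (f j) (f (j+1)), W i = u) with hSS
    have hSSk : ∀ j, (SS j).card ≤ k := by
      intro j
      simp only [hSS]
      rw [Finset.filter_congr_decidable]
      exact seg_card m k hm W (f j) (f (j+1))
        (by rw [hfv j]; exact hv) (by rw [hfv (j+1), hfv j]) (hlen j)
    have hlight : ∀ u : Fin (4*m), ¬ u.val < 2*m → ∃ j, j < J ∧ u ∈ SS j := by
      intro u hu
      obtain ⟨i0, hi0a, hi0⟩ := hvio u a0
      have hdecomp : i0 = (a0 + (i0 - a0) % p) + ((i0 - a0)/p)*p := by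
        have := Nat.mod_add_div' (i0 - a0) p
        omega
      have hWi' : W (a0 + (i0 - a0) % p) = u := by
        rw [← periodic_iter hper ((i0 - a0)/p) (a0 + (i0 - a0) % p), ← hdecomp]
        exact hi0
      have hi'lt : a0 + (i0 - a0) % p < a0 + p := by
        have := Nat.mod_lt (i0 - a0) hp
        omega
      obtain ⟨j, hjJ, hj1, hj2⟩ := chain_locate hmono
        (show f 0 ≤ a0 + (i0 - a0) % p by rw [hf0]; omega)
        (show a0 + (i0 - a0) % p < f J by omega)
      refine ⟨j, hjJ, ?_⟩
      rw [hSS]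
      simp only [Finset.mem_filter, Finset.mem_univ, true_and]
      exact ⟨hu, ⟨a0 + (i0 - a0) % p, Finset.mem_Ico.2 ⟨hj1, hj2⟩, hWi'⟩⟩
    have hcard1 : 2*m ≤ J * k := by
      have hsub : Finset.univ.filter (fun u : Fin (4*m) => ¬ u.val < 2*m)
          ⊆ (Finset.range J).biUnion SS := by
        intro u hu
        rw [Finset.mem_filter] at hu
        obtain ⟨j, hjJ, hju⟩ := hlight u hu.2
        exact Finset.mem_biUnion.2 ⟨j, Finset.mem_range.2 hjJ, hju⟩
      have hc2 : (Finset.univ.filter (fun u : Fin (4*m) => ¬ u.val < 2*m)).card = 2*m := by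
        have h1 := Finset.card_filter_add_card_filter_not
          (s := (Finset.univ : Finset (Fin (4*m)))) (p := fun u => u.val < 2*m)
        have h2 := card_filter_lt (4*m) (2*m) (by omega)
        have h3 : (Finset.univ : Finset (Fin (4*m))).card = 4*m := by simp
        omega
      calc 2*m = (Finset.univ.filter (fun u : Fin (4*m) => ¬ u.val < 2*m)).card := hc2.symm
        _ ≤ ((Finset.range J).biUnion SS).card := Finset.card_le_card hsub
        _ ≤ ∑ j ∈ Finset.range J, (SS j).card := Finset.card_biUnion_le
        _ ≤ ∑ j ∈ Finset.range J, k := Finset.sum_le_sum (fun j _ => hSSk j)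
        _ = J * k := by rw [Finset.sum_const, Finset.card_range, smul_eq_mul]
    have hJM : J ≤ ((Finset.range p).filter (fun i => W i = v)).card := by
      have hmaps : ∀ j ∈ Finset.range J,
          f j % p ∈ (Finset.range p).filter (fun i => W i = v) := by
        intro j _
        rw [Finset.mem_filter, Finset.mem_range]
        exact ⟨Nat.mod_lt _ hp, by rw [← periodic_mod hp hper]; exact hfv j⟩
      have hinj : Set.InjOn (fun j => f j % p) (Finset.range J) := by
        intro j1 h1 j2 h2 hmod
        simp only [Finset.coe_range, Set.mem_Iio] at h1 h2
        have hb1 : a0 ≤ f j1 := by have := hflb j1; omega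
        have hb2 : a0 ≤ f j2 := by have := hflb j2; omega
        have heq := mod_window_inj hb1 (hJmin j1 h1) hb2 (hJmin j2 h2) hmod
        exact (strictMono_nat_of_lt_succ hmono).injective heq
      simpa using Finset.card_le_card_of_injOn (fun j => f j % p) hmaps hinj
    calc 2*m ≤ J * k := hcard1
      _ ≤ ((Finset.range p).filter (fun i => W i = v)).card * k :=
          Nat.mul_le_mul_right _ hJM
      _ = k * ((Finset.range p).filter (fun i => W i = v)).card := Nat.mul_comm _ _
  have hsumM : ∑ v ∈ (Finset.univ : Finset (Fin (4*m))),
      ((Finset.range p).filter (fun i => W i = v)).card = p := by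
    rw [← Finset.card_eq_sum_card_fiberwise
      (f := W) (s := Finset.range p) (t := Finset.univ) (fun x _ => Finset.mem_univ _)]
    exact Finset.card_range p
  have hH : ∑ v ∈ Finset.univ.filter (fun v : Fin (4*m) => v.val < 2*m),
      ((Finset.range p).filter (fun i => W i = v)).card ≤ p := by
    calc ∑ v ∈ Finset.univ.filter (fun v : Fin (4*m) => v.val < 2*m),
        ((Finset.range p).filter (fun i => W i = v)).card
        ≤ ∑ v ∈ (Finset.univ : Finset (Fin (4*m))),
            ((Finset.range p).filter (fun i => W i = v)).card :=
          Finset.sum_le_sum_of_subset (Finset.filter_subset _ _)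
      _ = p := hsumM
  have hfinal : 2*m * (2*m) ≤ k * p := by
    calc 2*m * (2*m)
        = ∑ _v ∈ Finset.univ.filter (fun v : Fin (4*m) => v.val < 2*m), 2*m := by
          rw [Finset.sum_const, card_filter_lt (4*m) (2*m) (by omega), smul_eq_mul]
      _ ≤ ∑ v ∈ Finset.univ.filter (fun v : Fin (4*m) => v.val < 2*m),
            k * ((Finset.range p).filter (fun i => W i = v)).card :=
          Finset.sum_le_sum (fun v hv => hcount v (Finset.mem_filter.1 hv).2)
      _ = k * ∑ v ∈ Finset.univ.filter (fun v : Fin (4*m) => v.val < 2*m),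
            ((Finset.range p).filter (fun i => W i = v)).card := by
          rw [Finset.mul_sum]
      _ ≤ k * p := Nat.mul_le_mul_left _ hH
  calc (4*m)^2 = 4*(2*m*(2*m)) := by ring
    _ ≤ 4*(k*p) := Nat.mul_le_mul_left _ hfinal
    _ = 4*k*p := by ring

end SWBA

/-- Size–approximation trade-off: for every k ≥ 1 and n divisible by 4 there is a metric
graph on n vertices such that any closed walk whose expansion has cost at most k·OPT
has size at least n²/(4k). -/
theorem small_walks_bad_approximation (k n : ℕ) (hk : 1 ≤ k) (hn : 4 ∣ n) :
    ∃ (l : Fin n → Fin n → ℝ≥0∞) (φ : Fin n → ℝ≥0∞),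
      (∀ v, l v v = 0) ∧ (∀ u v, l u v = l v u) ∧
      (∀ u v w, l u w ≤ l u v + l v w) ∧
      (∀ u v, u ≠ v → 0 < l u v ∧ l u v ≠ ⊤) ∧
      (∀ v, 0 < φ v ∧ φ v ≤ 1) ∧
      ∀ (W : ℕ → Fin n) (p : ℕ), 0 < p → (∀ i, W (i + p) = W i) →
        VisitsInfOften W → walkCost l φ W ≤ (k : ℝ≥0∞) * OPT l φ →
        n ^ 2 ≤ 4 * k * p := by
  obtain ⟨m, rfl⟩ := hn
  rcases Nat.eq_zero_or_pos m with rfl | hm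
  · refine ⟨fun _ _ => 0, fun _ => 1, fun v => rfl, fun u v => rfl,
      fun u v w => by simp, fun u v h => u.elim0, fun v => v.elim0,
      fun W p hp hper hvio hcost => by simp⟩
  · exact ⟨SWBA.lf m k, SWBA.ph m, SWBA.lf_self m k, SWBA.lf_symm m k,
      SWBA.lf_triangle m k, fun u v h => SWBA.lf_pos m k h,
      SWBA.ph_pos_le m hm,
      fun W p hp hper hvio hcost => SWBA.main_count m k hm hk W p hp hper hvio hcost⟩
end
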